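/- Let p ∈ (1, 2) and let x, u ∈ ℝ^d be such that max(|x|, |x+u|) > 0. Then |x + u|^p − |x|^p − p |x|^{p−2} ⟨x, u⟩ · 1_{x ≠ 0} ≥ (p(p−1)/2) |u|² (max(|x|, |x+u|))^{p−2}, where the indicator 1_{x ≠ 0} means that the third term on the left-hand side is 0 when x = 0. -/

import Mathlib

open scoped RealInnerProductSpace Classical

/-- Tangent line inequality for concave power: for `0 ≤ q ≤ 1`, `c > 0`, `s ≥ 0`,
`s ^ q ≤ c ^ q + q c^(q-1) (s - c)`. -/
private lemma rpow_tangent_le {q c s : ℝ} (hq0 : 0 ≤ q) (hq1 : q ≤ 1) (hc : 0 < c)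
    (hs : 0 ≤ s) : s ^ q ≤ c ^ q + q * c ^ (q - 1) * (s - c) := by
  have hsc : (0:ℝ) ≤ s / c := div_nonneg hs hc.le
  have ht : (-1 : ℝ) ≤ s / c - 1 := by linarith
  have hb := rpow_one_add_le_one_add_mul_self ht hq0 hq1
  rw [add_sub_cancel] at hb
  have h1 : s ^ q = c ^ q * (s / c) ^ q := by
    rw [← Real.mul_rpow hc.le hsc, mul_div_cancel₀ _ hc.ne']
  have h2 : c ^ (q - 1) * (s - c) = c ^ q * (s / c - 1) := by
    rw [Real.rpow_sub hc, Real.rpow_one]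
    field_simp
  have hcq : (0:ℝ) < c ^ q := Real.rpow_pos_of_pos hc q
  calc s ^ q = c ^ q * (s / c) ^ q := h1
    _ ≤ c ^ q * (1 + q * (s / c - 1)) := by
        exact mul_le_mul_of_nonneg_left hb hcq.le
    _ = c ^ q + q * (c ^ (q - 1) * (s - c)) := by rw [h2]; ring
    _ = c ^ q + q * c ^ (q - 1) * (s - c) := by ring

private lemma oneD_case_le {p a b : ℝ} (hp1 : 1 < p) (hp2 : p < 2) (ha : 0 < a)
    (hab : a ≤ b) :
    p * (p - 1) / 2 * b ^ (p - 2) * (b - a) ^ 2 ≤ b ^ p - a ^ p - p * a ^ (p - 1) * (b - a) := by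
  set K : ℝ := p * (p - 1) / 2 * b ^ (p - 2) with hK
  set f : ℝ → ℝ := fun t => t ^ p - a ^ p - p * a ^ (p - 1) * (t - a) - K * (t - a) ^ 2 with hf
  have hderiv : ∀ t : ℝ, 0 < t →
      HasDerivAt f (p * t ^ (p - 1) - p * a ^ (p - 1) - K * (2 * (t - a))) t := by
    intro t ht
    have h1 : HasDerivAt (fun t : ℝ => t ^ p) (p * t ^ (p - 1)) t :=
      Real.hasDerivAt_rpow_const (Or.inl ht.ne')
    have h2 : HasDerivAt (fun t : ℝ => p * a ^ (p - 1) * (t - a)) (p * a ^ (p - 1)) t := by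
      simpa using ((hasDerivAt_id t).sub_const a).const_mul (p * a ^ (p - 1))
    have h3 : HasDerivAt (fun t : ℝ => K * (t - a) ^ 2) (K * (2 * (t - a))) t := by
      have := (((hasDerivAt_id t).sub_const a).pow 2).const_mul K
      simpa using this
    exact ((h1.sub_const (a ^ p)).sub h2).sub h3
  have hmono : MonotoneOn f (Set.Icc a b) := by
    apply monotoneOn_of_hasDerivWithinAt_nonneg (convex_Icc a b)
      (f' := fun t => p * t ^ (p - 1) - p * a ^ (p - 1) - K * (2 * (t - a)))
    · intro t htm
      exact (hderiv t (lt_of_lt_of_le ha htm.1)).continuousAt.continuousWithinAt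
    · intro t htm
      rw [interior_Icc] at htm
      exact (hderiv t (ha.trans htm.1)).hasDerivWithinAt
    · intro t htm
      rw [interior_Icc] at htm
      obtain ⟨hta, htb⟩ := htm
      have ht : 0 < t := ha.trans hta
      -- tangent at t gives a^(p-1) ≤ t^(p-1) + (p-1) t^(p-2) (a - t)
      have htan := rpow_tangent_le (q := p - 1) (c := t) (s := a)
        (by linarith) (by linarith) ht ha.le
      have hq2 : p - 1 - 1 = p - 2 := by ring
      rw [hq2] at htan
      -- b^(p-2) ≤ t^(p-2)
      have hbt : b ^ (p - 2) ≤ t ^ (p - 2) :=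
        Real.rpow_le_rpow_of_nonpos ht htb.le (by linarith)
      have hta' : 0 ≤ t - a := by linarith
      have hpp : 0 ≤ p * (p - 1) := by nlinarith
      have key : p * (p - 1) * b ^ (p - 2) * (t - a) ≤ p * (p - 1) * t ^ (p - 2) * (t - a) := by
        apply mul_le_mul_of_nonneg_right _ hta'
        exact mul_le_mul_of_nonneg_left hbt hpp
      have hK2 : K * (2 * (t - a)) = p * (p - 1) * b ^ (p - 2) * (t - a) := by
        rw [hK]; ring
      rw [hK2]
      nlinarith [htan, key]
  have h0 : f a = 0 := by simp [hf]
  have := hmono (Set.left_mem_Icc.mpr hab) (Set.right_mem_Icc.mpr hab) hab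
  rw [h0] at this
  simp only [hf] at this
  nlinarith [this]

private lemma oneD_case_ge {p a b : ℝ} (hp1 : 1 < p) (hp2 : p < 2) (ha : 0 < a)
    (hb : 0 ≤ b) (hba : b ≤ a) :
    p * (p - 1) / 2 * a ^ (p - 2) * (b - a) ^ 2 ≤ b ^ p - a ^ p - p * a ^ (p - 1) * (b - a) := by
  set K : ℝ := p * (p - 1) / 2 * a ^ (p - 2) with hK
  set f : ℝ → ℝ := fun t => t ^ p - a ^ p - p * a ^ (p - 1) * (t - a) - K * (t - a) ^ 2 with hf
  have hderiv : ∀ t : ℝ, 0 < t →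
      HasDerivAt f (p * t ^ (p - 1) - p * a ^ (p - 1) - K * (2 * (t - a))) t := by
    intro t ht
    have h1 : HasDerivAt (fun t : ℝ => t ^ p) (p * t ^ (p - 1)) t :=
      Real.hasDerivAt_rpow_const (Or.inl ht.ne')
    have h2 : HasDerivAt (fun t : ℝ => p * a ^ (p - 1) * (t - a)) (p * a ^ (p - 1)) t := by
      simpa using ((hasDerivAt_id t).sub_const a).const_mul (p * a ^ (p - 1))
    have h3 : HasDerivAt (fun t : ℝ => K * (t - a) ^ 2) (K * (2 * (t - a))) t := by
      have := (((hasDerivAt_id t).sub_const a).pow 2).const_mul K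
      simpa using this
    exact ((h1.sub_const (a ^ p)).sub h2).sub h3
  have hanti : AntitoneOn f (Set.Icc b a) := by
    apply antitoneOn_of_hasDerivWithinAt_nonpos (convex_Icc b a)
      (f' := fun t => p * t ^ (p - 1) - p * a ^ (p - 1) - K * (2 * (t - a)))
    · -- continuity, including possibly at 0
      have hc1 : ContinuousOn (fun t : ℝ => t ^ p) (Set.Icc b a) := by
        intro t _
        exact (Real.continuousAt_rpow_const t p (Or.inr (by linarith))).continuousWithinAt
      have : ContinuousOn f (Set.Icc b a) := by
        apply ((hc1.sub continuousOn_const).sub (by fun_prop)).sub (by fun_prop)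
      exact this
    · intro t htm
      rw [interior_Icc] at htm
      exact (hderiv t (lt_of_le_of_lt hb htm.1)).hasDerivWithinAt
    · intro t htm
      rw [interior_Icc] at htm
      obtain ⟨htb, hta⟩ := htm
      have ht : 0 < t := lt_of_le_of_lt hb htb
      -- tangent at a gives t^(p-1) ≤ a^(p-1) + (p-1) a^(p-2) (t - a)
      have htan := rpow_tangent_le (q := p - 1) (c := a) (s := t)
        (by linarith) (by linarith) ha ht.le
      have hq2 : p - 1 - 1 = p - 2 := by ring
      rw [hq2] at htan
      have hK2 : K * (2 * (t - a)) = p * (p - 1) * a ^ (p - 2) * (t - a) := by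
        rw [hK]; ring
      rw [hK2]
      nlinarith [htan]
  have h0 : f a = 0 := by simp [hf]
  have := hanti (Set.left_mem_Icc.mpr hba) (Set.right_mem_Icc.mpr hba) hba
  rw [h0] at this
  simp only [hf] at this
  nlinarith [this]

private lemma oneD {p a b : ℝ} (hp1 : 1 < p) (hp2 : p < 2) (ha : 0 < a) (hb : 0 ≤ b) :
    p * (p - 1) / 2 * (max a b) ^ (p - 2) * (b - a) ^ 2 ≤
      b ^ p - a ^ p - p * a ^ (p - 1) * (b - a) := by
  rcases le_total a b with hab | hba
  · rw [max_eq_right hab]; exact oneD_case_le hp1 hp2 ha hab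
  · rw [max_eq_left hba]; exact oneD_case_ge hp1 hp2 ha hb hba

/-- Deterministic pointwise inequality underlying Lemma 3.5: for `p ∈ (1, 2)`
and `x, u ∈ ℝ^d` with `max(|x|, |x+u|) > 0`,
`|x+u|^p - |x|^p - p|x|^(p-2)⟨x,u⟩·1_{x ≠ 0} ≥ (p(p-1)/2)|u|² (max(|x|,|x+u|))^(p-2)`,
where the indicator means the third term on the left is `0` when `x = 0`. -/
theorem norm_rpow_jump_lower_bound_p_lt_two
    (p : ℝ) (hp1 : 1 < p) (hp2 : p < 2) (d : ℕ)
    (x u : EuclideanSpace ℝ (Fin d)) (h : 0 < max ‖x‖ ‖x + u‖) :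
    p * (p - 1) / 2 * ‖u‖ ^ 2 * (max ‖x‖ ‖x + u‖) ^ (p - 2) ≤
      ‖x + u‖ ^ p - ‖x‖ ^ p -
        (if x = 0 then (0 : ℝ) else p * ‖x‖ ^ (p - 2) * ⟪x, u⟫) := by
  by_cases hx : x = 0
  · subst hx
    rw [if_pos rfl]
    rw [zero_add] at h ⊢
    rw [norm_zero] at h ⊢
    rw [max_eq_right (norm_nonneg u)] at h ⊢
    have hu : 0 < ‖u‖ := h
    have h1 : ‖u‖ ^ (2:ℕ) * ‖u‖ ^ (p - 2) = ‖u‖ ^ p := by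
      rw [← Real.rpow_natCast ‖u‖ 2, ← Real.rpow_add hu]
      norm_num
    have h0 : (0:ℝ) ^ p = 0 := Real.zero_rpow (by positivity)
    rw [h0]
    have hup : 0 < ‖u‖ ^ p := Real.rpow_pos_of_pos hu p
    have hcoef : p * (p - 1) / 2 ≤ 1 := by nlinarith
    calc p * (p - 1) / 2 * ‖u‖ ^ 2 * ‖u‖ ^ (p - 2)
        = p * (p - 1) / 2 * (‖u‖ ^ (2:ℕ) * ‖u‖ ^ (p - 2)) := by ring
      _ = p * (p - 1) / 2 * ‖u‖ ^ p := by rw [h1]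
      _ ≤ 1 * ‖u‖ ^ p := by
          apply mul_le_mul_of_nonneg_right hcoef hup.le
      _ = ‖u‖ ^ p - 0 - 0 := by ring
  · rw [if_neg hx]
    set a := ‖x‖ with hadef
    set b := ‖x + u‖ with hbdef
    set s := ‖u‖ with hsdef
    have ha : 0 < a := norm_pos_iff.mpr hx
    have hb : 0 ≤ b := norm_nonneg _
    have hs : 0 ≤ s := norm_nonneg _
    -- inner product identity
    have hinner : ⟪x, u⟫ = (b ^ 2 - a ^ 2 - s ^ 2) / 2 := by
      have := @norm_add_sq_real (EuclideanSpace ℝ (Fin d)) _ _ x u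
      rw [← hadef, ← hbdef, ← hsdef] at this
      linarith
    -- |b - a| ≤ s
    have habs : (b - a) ^ 2 ≤ s ^ 2 := by
      have h1 : |b - a| ≤ s := by
        have := abs_norm_sub_norm_le (x + u) x
        simpa [hsdef, hadef, hbdef] using this
      calc (b - a) ^ 2 = |b - a| ^ 2 := (sq_abs _).symm
        _ ≤ s ^ 2 := by
            apply pow_le_pow_left₀ (abs_nonneg _) h1
    set M := max a b with hM
    have haM : a ≤ M := le_max_left a b
    have hMpos : 0 < M := lt_of_lt_of_le ha haM
    have hMa : M ^ (p - 2) ≤ a ^ (p - 2) :=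
      Real.rpow_le_rpow_of_nonpos ha haM (by linarith)
    have hMp : 0 < M ^ (p - 2) := Real.rpow_pos_of_pos hMpos _
    have h1d := oneD (a := a) (b := b) hp1 hp2 ha hb
    -- rewrite a^(p-1) = a^(p-2) * a
    have hap : a ^ (p - 1) = a ^ (p - 2) * a := by
      rw [← Real.rpow_add_one ha.ne' (p - 2)]
      congr 1
      ring
    rw [hap] at h1d
    rw [hinner]
    -- coefficient comparison
    have hcoef : p * (p - 1) / 2 * M ^ (p - 2) ≤ p / 2 * a ^ (p - 2) := by
      have h2 : p * (p - 1) / 2 * M ^ (p - 2) ≤ p / 2 * M ^ (p - 2) := by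
        apply mul_le_mul_of_nonneg_right _ hMp.le
        nlinarith
      have h3 : p / 2 * M ^ (p - 2) ≤ p / 2 * a ^ (p - 2) := by
        apply mul_le_mul_of_nonneg_left hMa (by linarith)
      linarith
    nlinarith [mul_le_mul_of_nonneg_right hcoef (sub_nonneg.mpr habs), h1d]
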